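/- Let λ : ℕ → ℝ be multiplicative with λ(p) ≥ 0 for all primes p ≤ Y, and suppose additionally that for every prime p ≤ Y^{1/m} and every 1 ≤ j ≤ m, λ(p^j) ≥ 0, where λ(p^j) = sin((j+1)θ_p)/sin(θ_p) for some θ_p ∈ (0, π). Then for every prime p ≤ Y, writing m_p = ⌊log Y / log p⌋, one has λ(p) ≥ 2cos(π/(m_p + 1)). -/

import Mathlib

open Real

lemma sin_neg_of_pi_lt_of_lt_two_pi (x : ℝ) (h1 : π < x) (h2 : x < 2 * π) :
    Real.sin x < 0 := by
  have h := Real.sin_pos_of_pos_of_lt_pi (x := x - π) (by linarith) (by linarith)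
  have hs : Real.sin (x - π) = -Real.sin x := by
    rw [Real.sin_sub]; simp
  rw [hs] at h
  linarith

theorem stmt_18 (Y : ℝ) (hY : 2 ≤ Y)
    (lam : ℕ → ℝ) (hlam1 : lam 1 = 1)
    (hlammul : ∀ a b : ℕ, Nat.Coprime a b → lam (a * b) = lam a * lam b)
    (θ : ℕ → ℝ) (hθ : ∀ p : ℕ, p.Prime → 0 < θ p ∧ θ p < π)
    (hval : ∀ p : ℕ, p.Prime → ∀ j : ℕ,
      lam (p ^ j) = sin ((j + 1) * θ p) / sin (θ p))
    (hpos : ∀ p : ℕ, p.Prime → ∀ j : ℕ, 1 ≤ j → ((p : ℝ)) ^ j ≤ Y → 0 ≤ lam (p ^ j)) :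
    ∀ p : ℕ, p.Prime → (p : ℝ) ≤ Y →
      2 * cos (π / (⌊Real.log Y / Real.log p⌋₊ + 1)) ≤ lam p := by
  intro p hp hpY
  obtain ⟨hθ1, hθ2⟩ := hθ p hp
  have hs : 0 < Real.sin (θ p) := Real.sin_pos_of_pos_of_lt_pi hθ1 hθ2
  have hp2 : (2:ℝ) ≤ (p:ℝ) := by exact_mod_cast hp.two_le
  have hlogp : 0 < Real.log p := Real.log_pos (by linarith)
  set m := ⌊Real.log Y / Real.log p⌋₊ with hm
  have hY0 : (0:ℝ) < Y := by linarith
  have hpj : ∀ j : ℕ, j ≤ m → ((p:ℝ))^j ≤ Y := by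
    intro j hj
    have h1 : (j:ℝ) ≤ Real.log Y / Real.log p := by
      calc (j:ℝ) ≤ (m:ℝ) := by exact_mod_cast hj
        _ ≤ Real.log Y / Real.log p := Nat.floor_le (div_nonneg (Real.log_nonneg (by linarith)) hlogp.le)
    have h2 : (j:ℝ) * Real.log p ≤ Real.log Y := (le_div_iff₀ hlogp).mp h1
    have h3 : Real.log ((p:ℝ)^j) ≤ Real.log Y := by
      rw [Real.log_pow]; exact h2
    exact (Real.log_le_log_iff (by positivity) hY0).mp h3
  have hsin : ∀ k : ℕ, 1 ≤ k → k ≤ m + 1 → 0 ≤ Real.sin (k * θ p) := by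
    intro k hk1 hk2
    rcases Nat.lt_or_ge k 2 with h | h
    · interval_cases k
      simpa using (Real.sin_pos_of_pos_of_lt_pi hθ1 hθ2).le
    · obtain ⟨j, rfl⟩ : ∃ j, k = j + 1 := ⟨k - 1, by omega⟩
      have h0 := hpos p hp j (by omega) (hpj j (by omega))
      rw [hval p hp j] at h0
      have := mul_nonneg h0 hs.le
      rw [div_mul_cancel₀ _ (ne_of_gt hs)] at this
      convert this using 3
      · rfl
      push_cast
      ring
  have hmr : (0:ℝ) < (m:ℝ) + 1 := by positivity
  have hθle : θ p ≤ π / ((m:ℝ) + 1) := by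
    by_contra hc
    push_neg at hc
    set k := ⌊π / θ p⌋₊ + 1 with hk
    have hx : 0 < π / θ p := div_pos Real.pi_pos hθ1
    have hk2 : 2 ≤ k := by
      have : 1 ≤ ⌊π / θ p⌋₊ := Nat.le_floor (by rw [le_div_iff₀ hθ1]; push_cast; linarith)
      omega
    have hπlt : π < θ p * ((m:ℝ) + 1) := (div_lt_iff₀ hmr).mp hc
    have hkm : k ≤ m + 1 := by
      have h1 : π / θ p < (m:ℝ) + 1 := by
        rw [div_lt_iff₀ hθ1]; nlinarith
      have h2 : ⌊π / θ p⌋₊ < m + 1 := by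
        rw [Nat.floor_lt hx.le]; push_cast; linarith
      omega
    have hkθ1 : π < (k:ℝ) * θ p := by
      have h := Nat.lt_floor_add_one (π / θ p)
      have h' : π / θ p < (k:ℝ) := by rw [hk]; push_cast; push_cast at h; linarith
      calc π = (π / θ p) * θ p := by field_simp
        _ < (k:ℝ) * θ p := mul_lt_mul_of_pos_right h' hθ1
    have hkθ2 : (k:ℝ) * θ p < 2 * π := by
      have h := Nat.floor_le hx.le
      have h' : ((k:ℝ) - 1) ≤ π / θ p := by rw [hk]; push_cast; linarith
      have : ((k:ℝ) - 1) * θ p ≤ π := by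
        calc ((k:ℝ) - 1) * θ p ≤ (π / θ p) * θ p := mul_le_mul_of_nonneg_right h' hθ1.le
          _ = π := by field_simp
      nlinarith
    have h1 := hsin k (by omega) hkm
    have h2 := sin_neg_of_pi_lt_of_lt_two_pi _ hkθ1 hkθ2
    linarith
  have hlamp : lam p = 2 * Real.cos (θ p) := by
    have h := hval p hp 1
    rw [pow_one] at h
    rw [h]
    have : ((1:ℕ):ℝ) + 1 = 2 := by norm_num
    rw [this, Real.sin_two_mul, mul_assoc, mul_div_assoc,
      mul_div_cancel_left₀ _ (ne_of_gt hs)]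
  rw [hlamp]
  have hple : π / ((m:ℝ) + 1) ≤ π := by
    apply div_le_self Real.pi_pos.le
    push_cast; linarith [Nat.cast_nonneg (α := ℝ) m]
  have := Real.cos_le_cos_of_nonneg_of_le_pi hθ1.le hple hθle
  linarith
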